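/- Let A be a bounded self-adjoint operator on a complex Hilbert space H. Then A is nonnegative if and only if for every u ∈ H, the supremum over v ∈ H of |⟪Au, v⟫|²/⟪Av, v⟫ (with the convention that the quotient is 0 when ⟪Av, v⟫ = 0) equals ⟪Au, u⟫. -/

import Mathlib

open scoped InnerProductSpace

/-- Cauchy–Schwarz for the nonnegative sesquilinear form `(x, y) ↦ ⟪A x, y⟫`. -/
lemma cs_for_nonneg
    {H : Type*} [NormedAddCommGroup H] [InnerProductSpace ℂ H] [CompleteSpace H]
    (A : H →L[ℂ] H) (hA : IsSelfAdjoint A) (hpos : ∀ v : H, 0 ≤ (⟪A v, v⟫_ℂ).re)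
    (u v : H) : ‖⟪A u, v⟫_ℂ‖ ^ 2 ≤ (⟪A u, u⟫_ℂ).re * (⟪A v, v⟫_ℂ).re := by
  have hsymm : ∀ x y : H, ⟪A x, y⟫_ℂ = ⟪x, A y⟫_ℂ := fun x y => hA.isSymmetric x y
  set c : ℂ := ⟪A u, v⟫_ℂ with hc
  by_cases hc0 : c = 0
  · rw [hc0]
    simpa using mul_nonneg (hpos u) (hpos v)
  · set φ : ℂ := (starRingEnd ℂ) c / ‖c‖ with hφ
    have hcnorm : (‖c‖ : ℝ) ≠ 0 := norm_ne_zero_iff.mpr hc0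
    have hφφ : (starRingEnd ℂ) φ * φ = 1 := by
      rw [RCLike.conj_mul]
      have hφn : ‖φ‖ = 1 := by
        rw [hφ, norm_div, RCLike.norm_conj, Complex.norm_real,
          Real.norm_of_nonneg (norm_nonneg c), div_self hcnorm]
      rw [hφn]
      norm_num
    set y : H := φ • v with hy
    have hAuy : ⟪A u, y⟫_ℂ = (‖c‖ : ℂ) := by
      rw [hy, inner_smul_right, hφ, ← hc, div_mul_eq_mul_div, mul_comm,
        RCLike.mul_conj]
      have hne : (‖c‖ : ℂ) ≠ 0 := by exact_mod_cast hcnorm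
      field_simp
      simp
    have hAyu : ⟪A y, u⟫_ℂ = (‖c‖ : ℂ) := by
      have h1 : (starRingEnd ℂ) ⟪A y, u⟫_ℂ = ⟪A u, y⟫_ℂ := by
        rw [hsymm y u, inner_conj_symm, hsymm u y]
      have h2 : (starRingEnd ℂ) ⟪A y, u⟫_ℂ = (‖c‖ : ℂ) := by rw [h1, hAuy]
      calc ⟪A y, u⟫_ℂ = (starRingEnd ℂ) ((starRingEnd ℂ) ⟪A y, u⟫_ℂ) := by
              rw [Complex.conj_conj]
        _ = (‖c‖ : ℂ) := by rw [h2, Complex.conj_ofReal]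
    have hAyy : ⟪A y, y⟫_ℂ = ⟪A v, v⟫_ℂ := by
      rw [hy, map_smul, inner_smul_left, inner_smul_right, ← mul_assoc, hφφ,
        one_mul]
    clear_value y
    set a : ℝ := (⟪A v, v⟫_ℂ).re with ha
    set b : ℝ := (⟪A u, u⟫_ℂ).re with hb
    have expand : ∀ t : ℝ, (⟪A (u + (t : ℂ) • y), u + (t : ℂ) • y⟫_ℂ).re
        = a * t ^ 2 + (2 * ‖c‖) * t + b := by
      intro t
      rw [map_add, map_smul, inner_add_left, inner_add_right, inner_add_right,
        inner_smul_left, inner_smul_right, inner_smul_left, inner_smul_right,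
        hAuy, hAyu, hAyy]
      simp [Complex.conj_ofReal, Complex.add_re, Complex.mul_re, ha, hb]
      ring
    have hdisc : discrim a (2 * ‖c‖) b ≤ 0 := by
      apply discrim_le_zero
      intro t
      have heq : a * (t * t) + 2 * ‖c‖ * t + b
          = a * t ^ 2 + (2 * ‖c‖) * t + b := by ring
      rw [heq, ← expand t]
      exact hpos _
    rw [discrim] at hdisc
    nlinarith [norm_nonneg c, hpos v]

theorem variational_principle_iff_nonneg
    {H : Type*} [NormedAddCommGroup H] [InnerProductSpace ℂ H] [CompleteSpace H]
    (A : H →L[ℂ] H) (hA : IsSelfAdjoint A) :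
    (∀ v : H, 0 ≤ (⟪A v, v⟫_ℂ).re) ↔
      (∀ u : H,
        IsLUB
          {r : ℝ | ∃ v : H,
            r = if (⟪A v, v⟫_ℂ).re = 0 then 0
                else ‖⟪A u, v⟫_ℂ‖ ^ 2 / (⟪A v, v⟫_ℂ).re}
          ((⟪A u, u⟫_ℂ).re)) := by
  constructor
  · intro hpos u
    constructor
    · rintro r ⟨v, rfl⟩
      split_ifs with h
      · exact hpos u
      · rw [div_le_iff₀ (lt_of_le_of_ne (hpos v) (Ne.symm h))]
        exact cs_for_nonneg A hA hpos u v
    · intro bnd hb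
      apply hb
      refine ⟨u, ?_⟩
      split_ifs with h
      · exact h
      · have hconj : (starRingEnd ℂ) ⟪A u, u⟫_ℂ = ⟪A u, u⟫_ℂ := by
          rw [inner_conj_symm]
          exact (hA.isSymmetric u u).symm
        have hreal : ((⟪A u, u⟫_ℂ).re : ℂ) = ⟪A u, u⟫_ℂ :=
          Complex.conj_eq_iff_re.mp hconj
        have hnorm : ‖⟪A u, u⟫_ℂ‖ ^ 2 = ((⟪A u, u⟫_ℂ).re) ^ 2 := by
          rw [← hreal]
          simp [Complex.norm_real, Real.norm_eq_abs, sq_abs]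
        rw [hnorm, sq, mul_div_assoc, div_self h, mul_one]
  · intro h v
    have hub := (h v).1
    have h0 : (0 : ℝ) ∈ {r : ℝ | ∃ w : H,
        r = if (⟪A w, w⟫_ℂ).re = 0 then 0
            else ‖⟪A v, w⟫_ℂ‖ ^ 2 / (⟪A w, w⟫_ℂ).re} := by
      refine ⟨0, ?_⟩
      simp
    exact hub h0
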